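/- For all u>0 and all λ ≥ 2, ∫_λ^∞ x^{u−1} e^{−x} dx ≥ (2/3) λ^{u−1} e^{−λ}. Equivalently, if ξ has distribution Gamma(u,v) with u,v>0, then P(ξ ≥ λ/v) ≥ (2/3) λ^{u−1} e^{−λ}/Γ(u) for all λ ≥ 2. -/

import Mathlib

open MeasureTheory ProbabilityTheory Real

lemma aux_key (u : ℝ) (hu : 0 < u) (l : ℝ) (hl : 2 ≤ l) :
    (2 / 3) * (l ^ (u - 1) * Real.exp (-l)) ≤ ∫ x in Set.Ioi l, x ^ (u - 1) * Real.exp (-x) := by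
  have hl0 : (0:ℝ) < l := by linarith
  have hlne : l ≠ 0 := hl0.ne'
  set b : ℝ := 1 + 1/l with hbdef
  have hb : 0 < b := by positivity
  -- integrability of the lower bound
  have hgi : IntegrableOn (fun x : ℝ => l ^ (u - 1) * Real.exp 1 * Real.exp (-(b * x)))
      (Set.Ioi l) := by
    have := (exp_neg_integrableOn_Ioi l hb).const_mul (l ^ (u - 1) * Real.exp 1)
    simpa [neg_mul, IntegrableOn] using this
  -- integrability of the Gamma integrand
  have hfi : IntegrableOn (fun x : ℝ => x ^ (u - 1) * Real.exp (-x)) (Set.Ioi l) := by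
    have h := (Real.GammaIntegral_convergent hu).mono_set
      (Set.Ioi_subset_Ioi hl0.le)
    exact h.congr_fun (fun x _ => mul_comm _ _) measurableSet_Ioi
  -- pointwise bound
  have hpt : ∀ x ∈ Set.Ioi l,
      l ^ (u - 1) * Real.exp 1 * Real.exp (-(b * x)) ≤ x ^ (u - 1) * Real.exp (-x) := by
    intro x hx
    have hx' : l < x := hx
    have hx0 : 0 < x := lt_trans hl0 hx'
    have hbx : b * x = x + x / l := by rw [hbdef]; field_simp
    have h1 : Real.exp 1 * Real.exp (-(b * x)) = Real.exp (-x) * Real.exp (1 - x / l) := by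
      rw [← Real.exp_add, ← Real.exp_add, hbx]
      congr 1
      ring
    have h2 : Real.exp (1 - x / l) ≤ l / x := by
      have h3 : x / l ≤ Real.exp (x / l - 1) := by
        have := Real.add_one_le_exp (x / l - 1)
        linarith
      have h4 : Real.exp (1 - x / l) = (Real.exp (x / l - 1))⁻¹ := by
        rw [← Real.exp_neg]; ring_nf
      have h6 : (l / x) = (x / l)⁻¹ := by rw [inv_div]
      rw [h4, h6]
      have hxl : (0:ℝ) < x / l := by positivity
      gcongr
    have h5 : l ^ (u - 1) * (l / x) ≤ x ^ (u - 1) := by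
      have hpow : l ^ u ≤ x ^ u := Real.rpow_le_rpow hl0.le hx'.le hu.le
      have hlu : l ^ (u - 1) = l ^ u / l := by
        rw [Real.rpow_sub hl0, Real.rpow_one]
      have hxu : x ^ (u - 1) = x ^ u / x := by
        rw [Real.rpow_sub hx0, Real.rpow_one]
      rw [hlu, hxu]
      have h7 : l ^ u / l * (l / x) = l ^ u / x := by field_simp
      rw [h7]
      gcongr
    calc l ^ (u - 1) * Real.exp 1 * Real.exp (-(b * x))
        = l ^ (u - 1) * (Real.exp (-x) * Real.exp (1 - x / l)) := by rw [mul_assoc, h1]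
      _ ≤ l ^ (u - 1) * (Real.exp (-x) * (l / x)) := by
          apply mul_le_mul_of_nonneg_left _ (Real.rpow_nonneg hl0.le _)
          exact mul_le_mul_of_nonneg_left h2 (Real.exp_pos _).le
      _ = (l ^ (u - 1) * (l / x)) * Real.exp (-x) := by ring
      _ ≤ x ^ (u - 1) * Real.exp (-x) := by
          exact mul_le_mul_of_nonneg_right h5 (Real.exp_pos _).le
  -- value of the lower integral
  have hgint : ∫ x in Set.Ioi l, l ^ (u - 1) * Real.exp 1 * Real.exp (-(b * x))
      = l ^ (u - 1) * Real.exp 1 * (b⁻¹ * Real.exp (-(b * l))) := by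
    rw [MeasureTheory.integral_const_mul]
    congr 1
    have h8 := integral_comp_mul_left_Ioi (fun y : ℝ => Real.exp (-y)) l hb
    rw [h8, integral_exp_neg_Ioi, smul_eq_mul]
  have hbl : b * l = l + 1 := by rw [hbdef]; field_simp
  have hval : Real.exp 1 * (b⁻¹ * Real.exp (-(b * l))) = b⁻¹ * Real.exp (-l) := by
    rw [hbl, ← mul_assoc, mul_comm (Real.exp 1) b⁻¹, mul_assoc, ← Real.exp_add]
    congr 2
    ring
  have hbinv : (2:ℝ)/3 ≤ b⁻¹ := by
    have hbeq : b = (l + 1) / l := by rw [hbdef]; field_simp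
    rw [hbeq, inv_div]
    rw [le_div_iff₀ (by linarith)]
    linarith
  calc (2 / 3) * (l ^ (u - 1) * Real.exp (-l))
      ≤ b⁻¹ * (l ^ (u - 1) * Real.exp (-l)) := by
        apply mul_le_mul_of_nonneg_right hbinv (by positivity)
    _ = l ^ (u - 1) * Real.exp 1 * (b⁻¹ * Real.exp (-(b * l))) := by
        rw [mul_assoc, hval]; ring
    _ = ∫ x in Set.Ioi l, l ^ (u - 1) * Real.exp 1 * Real.exp (-(b * x)) := hgint.symm
    _ ≤ ∫ x in Set.Ioi l, x ^ (u - 1) * Real.exp (-x) :=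
        setIntegral_mono_on hgi hfi measurableSet_Ioi hpt

theorem statement7 (u : ℝ) (hu : 0 < u) (l : ℝ) (hl : 2 ≤ l) :
    (2 / 3) * (l ^ (u - 1) * Real.exp (-l)) ≤ ∫ x in Set.Ioi l, x ^ (u - 1) * Real.exp (-x) ∧
    ∀ v : ℝ, 0 < v →
      ENNReal.ofReal ((2 / 3) * (l ^ (u - 1) * Real.exp (-l)) / Real.Gamma u) ≤
        gammaMeasure u v (Set.Ici (l / v)) := by
  constructor
  · exact aux_key u hu l hl
  · intro v hv
    have hl0 : (0:ℝ) < l := by linarith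
    have hlv : 0 < l / v := div_pos hl0 hv
    have hG : 0 < Real.Gamma u := Real.Gamma_pos_of_pos hu
    -- integrability of the pdf on Ioi (l/v)
    have hfi : IntegrableOn (fun x : ℝ => x ^ (u - 1) * Real.exp (-x)) (Set.Ioi l) := by
      have h := (Real.GammaIntegral_convergent hu).mono_set (Set.Ioi_subset_Ioi hl0.le)
      exact h.congr_fun (fun x _ => mul_comm _ _) measurableSet_Ioi
    have hcomp : IntegrableOn (fun x : ℝ => (v * x) ^ (u - 1) * Real.exp (-(v * x)))
        (Set.Ioi (l / v)) := by
      rw [integrableOn_Ioi_comp_mul_left_iff (fun y : ℝ => y ^ (u - 1) * Real.exp (-y)) (l/v) hv]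
      rw [mul_div_cancel₀ _ hv.ne']
      exact hfi
    -- pdf equals scaled composition on Ioi (l/v)
    have hpdf_eq : ∀ x ∈ Set.Ioi (l / v), gammaPDFReal u v x
        = (v / Real.Gamma u) * ((v * x) ^ (u - 1) * Real.exp (-(v * x))) := by
      intro x hx
      have hx0 : 0 < x := lt_trans hlv hx
      rw [gammaPDFReal, if_pos hx0.le]
      have hvx : (v * x) ^ (u - 1) = v ^ (u - 1) * x ^ (u - 1) :=
        Real.mul_rpow hv.le hx0.le
      rw [hvx]
      have hvu : v ^ u = v ^ (u - 1) * v := by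
        rw [← Real.rpow_add_one hv.ne']; ring_nf
      rw [hvu]
      field_simp
    have hpdfi : IntegrableOn (gammaPDFReal u v) (Set.Ioi (l / v)) := by
      exact MeasureTheory.IntegrableOn.congr_fun (hcomp.const_mul (v / Real.Gamma u))
        (fun x hx => (hpdf_eq x hx).symm) measurableSet_Ioi
    -- value of the real integral
    have hint : (2 / 3) * (l ^ (u - 1) * Real.exp (-l)) / Real.Gamma u
        ≤ ∫ x in Set.Ioi (l / v), gammaPDFReal u v x := by
      have heq : ∫ x in Set.Ioi (l / v), gammaPDFReal u v x
          = (v / Real.Gamma u) * ∫ x in Set.Ioi (l / v), (v * x) ^ (u - 1) * Real.exp (-(v * x)) := by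
        rw [← MeasureTheory.integral_const_mul]
        exact setIntegral_congr_fun measurableSet_Ioi hpdf_eq
      have hcv : ∫ x in Set.Ioi (l / v), (v * x) ^ (u - 1) * Real.exp (-(v * x))
          = v⁻¹ * ∫ x in Set.Ioi l, x ^ (u - 1) * Real.exp (-x) := by
        have := integral_comp_mul_left_Ioi
          (fun y : ℝ => y ^ (u - 1) * Real.exp (-y)) (l / v) hv
        rw [mul_div_cancel₀ _ hv.ne'] at this
        simpa [smul_eq_mul] using this
      have hfinal : v / Real.Gamma u *
          (v⁻¹ * ∫ x in Set.Ioi l, x ^ (u - 1) * Real.exp (-x))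
          = (∫ x in Set.Ioi l, x ^ (u - 1) * Real.exp (-x)) / Real.Gamma u := by
        field_simp
      rw [heq, hcv, hfinal]
      gcongr
      exact aux_key u hu l hl
    -- pass to the measure
    rw [gammaMeasure, withDensity_apply _ measurableSet_Ici]
    have hIoi_le : ∫⁻ x in Set.Ioi (l / v), gammaPDF u v x
        ≤ ∫⁻ x in Set.Ici (l / v), gammaPDF u v x :=
      lintegral_mono_set Set.Ioi_subset_Ici_self
    refine le_trans ?_ hIoi_le
    have hofReal : ENNReal.ofReal (∫ x in Set.Ioi (l / v), gammaPDFReal u v x)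
        = ∫⁻ x in Set.Ioi (l / v), gammaPDF u v x := by
      rw [MeasureTheory.ofReal_integral_eq_lintegral_ofReal hpdfi]
      · rfl
      · exact Filter.Eventually.of_forall (gammaPDFReal_nonneg hu hv)
    rw [← hofReal]
    exact ENNReal.ofReal_le_ofReal hint
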